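/- arXiv:1604.05060 — 2 statements merged into one kernel-verified Lean document; each statement's English description precedes it below -/
import Mathlib

section
/- Let p, q be unit quaternions, and let Z = (U,V) and Z' = (U',V') be tangent vectors to S³×S³ at (p,q). Then the almost product structure P(U,V) = (pq⁻¹V, qp⁻¹U) satisfies: (a) P(P(Z)) = Z (P is involutive); (b) P(J(Z)) = −J(P(Z)) (P and J anti-commute); (c) g(PZ, PZ') = g(Z, Z') (P is compatible with g); (d) g(PZ, Z') = g(Z, PZ') (P is symmetric with respect to g). Moreover P(Z) is again a tangent vector to S³×S³ at (p,q). -/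
open Quaternion

noncomputable section

/-- Euclidean inner product on ℍ ≅ ℝ⁴: ⟨a,b⟩ = Re(a · conj b). -/
def innQ (a b : ℍ[ℝ]) : ℝ := (a * star b).re

/-- Euclidean product inner product on ℍ × ℍ. -/
def innP (Z Z' : ℍ[ℝ] × ℍ[ℝ]) : ℝ := innQ Z.1 Z'.1 + innQ Z.2 Z'.2

/-- Tangency to S³ × S³ at (p,q). -/
def Tangent (p q : ℍ[ℝ]) (Z : ℍ[ℝ] × ℍ[ℝ]) : Prop :=
  (p⁻¹ * Z.1).re = 0 ∧ (q⁻¹ * Z.2).re = 0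

/-- The almost complex structure J of the nearly Kähler S³×S³ at the point (p,q). -/
def Jmap (p q : ℍ[ℝ]) (Z : ℍ[ℝ] × ℍ[ℝ]) : ℍ[ℝ] × ℍ[ℝ] :=
  (Real.sqrt 3)⁻¹ •
    ((2 * (p * q⁻¹ * Z.2) - Z.1, -(2 * (q * p⁻¹ * Z.1)) + Z.2) : ℍ[ℝ] × ℍ[ℝ])

/-- The nearly Kähler metric g at the point (p,q). -/
def gmet (p q : ℍ[ℝ]) (Z Z' : ℍ[ℝ] × ℍ[ℝ]) : ℝ :=
  (4/3) * (innQ Z.1 Z'.1 + innQ Z.2 Z'.2)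
    - (2/3) * (innQ (p⁻¹ * Z.1) (q⁻¹ * Z'.2) + innQ (p⁻¹ * Z'.1) (q⁻¹ * Z.2))

/-- The almost product structure P at the point (p,q). -/
def Pmap (p q : ℍ[ℝ]) (Z : ℍ[ℝ] × ℍ[ℝ]) : ℍ[ℝ] × ℍ[ℝ] :=
  (p * q⁻¹ * Z.2, q * p⁻¹ * Z.1)

/-- The usual product structure Q. -/
def Qmap (Z : ℍ[ℝ] × ℍ[ℝ]) : ℍ[ℝ] × ℍ[ℝ] := (-Z.1, Z.2)

/-- The quaternion units i, j, k. -/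
def qi : ℍ[ℝ] := ⟨0, 1, 0, 0⟩
def qj : ℍ[ℝ] := ⟨0, 0, 1, 0⟩
def qk : ℍ[ℝ] := ⟨0, 0, 0, 1⟩

section Helpers

lemma re_mul_comm (a b : ℍ[ℝ]) : (a * b).re = (b * a).re := by
  simp [Quaternion.re_mul]; ring

lemma innQ_symm (a b : ℍ[ℝ]) : innQ a b = innQ b a := by
  simp [innQ, Quaternion.re_mul]; ring

lemma innQ_assoc (a x y : ℍ[ℝ]) : innQ (a * x) y = innQ x (star a * y) := by
  unfold innQ
  rw [star_mul, star_star, ← mul_assoc, mul_assoc a, re_mul_comm]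

lemma star_mul_self_of_norm_one {a : ℍ[ℝ]} (ha : ‖a‖ = 1) : star a * a = 1 := by
  rw [Quaternion.star_mul_self, Quaternion.normSq_eq_norm_mul_self, ha]
  norm_num

lemma inv_eq_star_of_norm_one {a : ℍ[ℝ]} (ha : ‖a‖ = 1) : a⁻¹ = star a :=
  inv_eq_of_mul_eq_one_left (star_mul_self_of_norm_one ha)

lemma innQ_mul_left {a : ℍ[ℝ]} (ha : star a * a = 1) (x y : ℍ[ℝ]) :
    innQ (a * x) (a * y) = innQ x y := by
  rw [innQ_assoc, ← mul_assoc, ha, one_mul]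

end Helpers

/-- basic properties of the almost product structure P. -/
theorem stmt_4 (p q : ℍ[ℝ]) (hp : ‖p‖ = 1) (hq : ‖q‖ = 1)
    (Z Z' : ℍ[ℝ] × ℍ[ℝ]) (hZ : Tangent p q Z) (hZ' : Tangent p q Z') :
    Pmap p q (Pmap p q Z) = Z ∧
    Pmap p q (Jmap p q Z) = -(Jmap p q (Pmap p q Z)) ∧
    gmet p q (Pmap p q Z) (Pmap p q Z') = gmet p q Z Z' ∧
    gmet p q (Pmap p q Z) Z' = gmet p q Z (Pmap p q Z') ∧
    Tangent p q (Pmap p q Z) := by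
  have hp0 : p ≠ 0 := by intro h; simp [h] at hp
  have hq0 : q ≠ 0 := by intro h; simp [h] at hq
  have hpi : p⁻¹ = star p := inv_eq_star_of_norm_one hp
  have hqi : q⁻¹ = star q := inv_eq_star_of_norm_one hq
  have hpq : star (p * q⁻¹) * (p * q⁻¹) = 1 := by
    rw [star_mul, hqi, star_star, ← hqi, ← hpi]
    rw [mul_assoc, ← mul_assoc p⁻¹, inv_mul_cancel₀ hp0, one_mul, mul_inv_cancel₀ hq0]
  have hqp : star (q * p⁻¹) * (q * p⁻¹) = 1 := by
    rw [star_mul, hpi, star_star, ← hpi, ← hqi]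
    rw [mul_assoc, ← mul_assoc q⁻¹, inv_mul_cancel₀ hq0, one_mul, mul_inv_cancel₀ hp0]
  have hpqs : star (p * q⁻¹) = q * p⁻¹ := by
    rw [star_mul, hqi, star_star, hpi]
  have hqps : star (q * p⁻¹) = p * q⁻¹ := by
    rw [star_mul, hpi, star_star, hqi]
  obtain ⟨U, V⟩ := Z
  obtain ⟨U', V'⟩ := Z'
  obtain ⟨h1, h2⟩ := hZ
  have e1 : p * q⁻¹ * (q * p⁻¹ * U) = U := by
    rw [mul_assoc p, mul_assoc, ← mul_assoc q⁻¹, inv_mul_cancel₀ hq0, one_mul,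
      ← mul_assoc, mul_inv_cancel₀ hp0, one_mul]
  have e1' : p * q⁻¹ * (q * p⁻¹ * U') = U' := by
    rw [mul_assoc p, mul_assoc, ← mul_assoc q⁻¹, inv_mul_cancel₀ hq0, one_mul,
      ← mul_assoc, mul_inv_cancel₀ hp0, one_mul]
  have e2 : q * p⁻¹ * (p * q⁻¹ * V) = V := by
    rw [mul_assoc q, mul_assoc, ← mul_assoc p⁻¹, inv_mul_cancel₀ hp0, one_mul,
      ← mul_assoc, mul_inv_cancel₀ hq0, one_mul]
  have e2' : q * p⁻¹ * (p * q⁻¹ * V') = V' := by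
    rw [mul_assoc q, mul_assoc, ← mul_assoc p⁻¹, inv_mul_cancel₀ hp0, one_mul,
      ← mul_assoc, mul_inv_cancel₀ hq0, one_mul]
  have c1 : p⁻¹ * (p * q⁻¹ * V) = q⁻¹ * V := by
    rw [← mul_assoc, ← mul_assoc, inv_mul_cancel₀ hp0, one_mul]
  have c1' : p⁻¹ * (p * q⁻¹ * V') = q⁻¹ * V' := by
    rw [← mul_assoc, ← mul_assoc, inv_mul_cancel₀ hp0, one_mul]
  have c2 : q⁻¹ * (q * p⁻¹ * U') = p⁻¹ * U' := by
    rw [← mul_assoc, ← mul_assoc, inv_mul_cancel₀ hq0, one_mul]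
  have c2' : q⁻¹ * (q * p⁻¹ * U) = p⁻¹ * U := by
    rw [← mul_assoc, ← mul_assoc, inv_mul_cancel₀ hq0, one_mul]
  refine ⟨?_, ?_, ?_, ?_, ?_, ?_⟩
  · -- P ∘ P = id
    simp only [Pmap, Prod.mk.injEq]
    exact ⟨e1, e2⟩
  · -- P anti-commutes with J
    simp only [Jmap, Pmap, Prod.smul_mk, Prod.mk.injEq, Prod.neg_mk, smul_neg]
    have f1 : p * q⁻¹ * 2 * (q * p⁻¹ * U) = 2 * U := by
      rw [mul_two (p * q⁻¹), ← two_mul, mul_assoc, e1]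
    have f2 : q * p⁻¹ * 2 * (p * q⁻¹ * V) = 2 * V := by
      rw [mul_two (q * p⁻¹), ← two_mul, mul_assoc, e2]
    constructor
    · rw [mul_smul_comm, ← smul_neg]
      congr 1
      rw [e1, mul_add, mul_neg, ← mul_assoc, f1]
      abel
    · rw [mul_smul_comm, ← smul_neg]
      congr 1
      rw [e2, mul_sub, ← mul_assoc, f2]
      abel
  · -- g(PZ, PZ') = g(Z, Z')
    show (4/3 : ℝ) * (innQ (p * q⁻¹ * V) (p * q⁻¹ * V') + innQ (q * p⁻¹ * U) (q * p⁻¹ * U'))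
        - (2/3) * (innQ (p⁻¹ * (p * q⁻¹ * V)) (q⁻¹ * (q * p⁻¹ * U'))
          + innQ (p⁻¹ * (p * q⁻¹ * V')) (q⁻¹ * (q * p⁻¹ * U)))
        = (4/3) * (innQ U U' + innQ V V')
        - (2/3) * (innQ (p⁻¹ * U) (q⁻¹ * V') + innQ (p⁻¹ * U') (q⁻¹ * V))
    rw [innQ_mul_left hpq, innQ_mul_left hqp, c1, c1', c2, c2',
      innQ_symm (q⁻¹ * V) (p⁻¹ * U'), innQ_symm (q⁻¹ * V') (p⁻¹ * U)]
    ring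
  · -- g(PZ, Z') = g(Z, PZ')
    show (4/3 : ℝ) * (innQ (p * q⁻¹ * V) U' + innQ (q * p⁻¹ * U) V')
        - (2/3) * (innQ (p⁻¹ * (p * q⁻¹ * V)) (q⁻¹ * V')
          + innQ (p⁻¹ * U') (q⁻¹ * (q * p⁻¹ * U)))
        = (4/3) * (innQ U (p * q⁻¹ * V') + innQ V (q * p⁻¹ * U'))
        - (2/3) * (innQ (p⁻¹ * U) (q⁻¹ * (q * p⁻¹ * U'))
          + innQ (p⁻¹ * (p * q⁻¹ * V')) (q⁻¹ * V))
    have d1 : innQ (p * q⁻¹ * V) U' = innQ V (q * p⁻¹ * U') := by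
      rw [innQ_assoc, hpqs]
    have d2 : innQ (q * p⁻¹ * U) V' = innQ U (p * q⁻¹ * V') := by
      rw [innQ_assoc, hqps, innQ_symm, innQ_assoc, hpqs, innQ_symm]
    rw [c1, c1', c2, c2', d1, d2,
      innQ_symm (q⁻¹ * V) (q⁻¹ * V'), innQ_symm (p⁻¹ * U') (p⁻¹ * U)]
    ring
  · -- tangency, first component
    show (p⁻¹ * (p * q⁻¹ * V)).re = 0
    rw [c1]; exact h2
  · -- tangency, second component
    show (q⁻¹ * (q * p⁻¹ * U)).re = 0
    rw [c2']; exact h1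
end
end

section
/- Let a, b, c, p, q be unit quaternions and consider the map F : S³×S³ → S³×S³, F(p,q) = (apc⁻¹, bqc⁻¹), whose differential at (p,q) sends a tangent vector (U,V) to (aUc⁻¹, bVc⁻¹). Then F is an isometry of the nearly Kähler metric g: for all tangent vectors Z = (U,V) and Z' = (U',V') at (p,q), one has g_{F(p,q)}((aUc⁻¹, bVc⁻¹), (aU'c⁻¹, bV'c⁻¹)) = g_{(p,q)}(Z, Z'). -/
open Quaternion

noncomputable section

lemma re_mul_comm_s7 (x y : ℍ[ℝ]) : (x * y).re = (y * x).re := by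
  simp [Quaternion.re_mul]; ring

lemma innQ_conj (x y u v : ℍ[ℝ]) (hx : ‖x‖ = 1) (hy : ‖y‖ = 1) :
    innQ (x * u * y) (x * v * y) = innQ u v := by
  have hx2 : ∀ w : ℍ[ℝ], star x * (x * w) = w := by
    intro w
    rw [← mul_assoc, Quaternion.star_mul_self,
      Quaternion.normSq_eq_norm_mul_self, hx]
    norm_num
  have hy2 : ∀ w : ℍ[ℝ], y * (star y * w) = w := by
    intro w
    rw [← mul_assoc, Quaternion.self_mul_star,
      Quaternion.normSq_eq_norm_mul_self, hy]
    norm_num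
  unfold innQ
  have h : x * u * y * star (x * v * y) = x * ((u * star v) * star x) := by
    simp only [StarMul.star_mul, mul_assoc, hy2]
  rw [h, re_mul_comm_s7, mul_assoc, Quaternion.star_mul_self,
    Quaternion.normSq_eq_norm_mul_self, hx]
  norm_num

/-- the map F(p,q) = (apc⁻¹, bqc⁻¹) is an isometry of the
nearly Kähler metric g. -/
theorem stmt_7 (a b c p q : ℍ[ℝ])
    (ha : ‖a‖ = 1) (hb : ‖b‖ = 1) (hc : ‖c‖ = 1) (hp : ‖p‖ = 1) (hq : ‖q‖ = 1)
    (Z Z' : ℍ[ℝ] × ℍ[ℝ]) (hZ : Tangent p q Z) (hZ' : Tangent p q Z') :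
    gmet (a * p * c⁻¹) (b * q * c⁻¹)
        (a * Z.1 * c⁻¹, b * Z.2 * c⁻¹) (a * Z'.1 * c⁻¹, b * Z'.2 * c⁻¹)
      = gmet p q Z Z' := by
  obtain ⟨Z1, Z2⟩ := Z
  obtain ⟨Z1', Z2'⟩ := Z'
  have ha0 : a ≠ 0 := by intro h; rw [h] at ha; simp at ha
  have hb0 : b ≠ 0 := by intro h; rw [h] at hb; simp at hb
  have hc0 : c ≠ 0 := by intro h; rw [h] at hc; simp at hc
  have hci : ‖c⁻¹‖ = 1 := by rw [norm_inv, hc]; norm_num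
  have key : ∀ u v : ℍ[ℝ],
      innQ ((a * p * c⁻¹)⁻¹ * (a * u * c⁻¹)) ((b * q * c⁻¹)⁻¹ * (b * v * c⁻¹))
        = innQ (p⁻¹ * u) (q⁻¹ * v) := by
    intro u v
    have h1 : (a * p * c⁻¹)⁻¹ * (a * u * c⁻¹) = c * (p⁻¹ * u) * c⁻¹ := by
      rw [mul_inv_rev, mul_inv_rev, inv_inv]
      simp [mul_assoc, inv_mul_cancel_left₀ ha0]
    have h2 : (b * q * c⁻¹)⁻¹ * (b * v * c⁻¹) = c * (q⁻¹ * v) * c⁻¹ := by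
      rw [mul_inv_rev, mul_inv_rev, inv_inv]
      simp [mul_assoc, inv_mul_cancel_left₀ hb0]
    rw [h1, h2, innQ_conj _ _ _ _ hc hci]
  unfold gmet
  simp only [key, innQ_conj _ _ _ _ ha hci, innQ_conj _ _ _ _ hb hci]
end
end
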